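/- Let m ≥ 2 and let Ψ₁, …, Ψ_{2m−2} : [A,B] → ℝ be continuously differentiable functions such that the family of derivatives {Ψ₁′, …, Ψ_{2m−2}′} is a Chebyshev system on [A,B]. Then for any points A = c₁ < c₂ < … < c_m ≤ B, the (2m−1)×(2m−1) matrix whose first m columns are the vectors (1, Ψ₁(c_j), Ψ₂(c_j), …, Ψ_{2m−2}(c_j))ᵀ for j = 1, …, m, and whose remaining m−1 columns are the vectors (0, Ψ₁′(c_j), Ψ₂′(c_j), …, Ψ_{2m−2}′(c_j))ᵀ for j = 2, …, m, has nonzero determinant. -/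

import Mathlib

def IsChebyshev {n : ℕ} (g : Fin n → ℝ → ℝ) (T : Set ℝ) : Prop :=
  ∀ t : Fin n → ℝ, StrictMono t → (∀ i, t i ∈ T) →
    (Matrix.of fun i j => g j (t i)).det ≠ 0

private lemma strictMono_of_lt_succ' {N : ℕ} (f : Fin N → ℝ)
    (h : ∀ i : ℕ, ∀ hi : i + 1 < N, f ⟨i, by omega⟩ < f ⟨i+1, hi⟩) : StrictMono f := by
  have key : ∀ b : ℕ, ∀ hb : b < N, ∀ a : ℕ, ∀ ha : a < N, a < b → f ⟨a, ha⟩ < f ⟨b, hb⟩ := by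
    intro b
    induction b with
    | zero => omega
    | succ n ih =>
      intro hb a ha hab
      rcases eq_or_lt_of_le (Nat.lt_succ_iff.mp hab) with h1 | h1
      · subst h1; exact h a hb
      · exact lt_trans (ih (by omega) a ha h1) (h n hb)
  intro a b hab
  have := key b.val b.isLt a.val a.isLt hab
  simpa using this

private lemma sum_fin_split {N n : ℕ} (hN : N = n + 1) (f : Fin N → ℝ) :
    ∑ i, f i = f ⟨0, by omega⟩ + ∑ k : Fin n, f ⟨k.val + 1, by omega⟩ := by
  subst hN
  rw [Fin.sum_univ_succ]
  rfl

set_option maxHeartbeats 1000000 in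
theorem stmt6 (m : ℕ) (hm : 2 ≤ m) (A B : ℝ) (hAB : A < B)
    (Ψ : Fin (2 * m - 2) → ℝ → ℝ)
    (hΨsmooth : ∀ k, ContDiffOn ℝ 1 (Ψ k) (Set.Icc A B))
    (hCheb' : IsChebyshev (fun k : Fin (2 * m - 2) => derivWithin (Ψ k) (Set.Icc A B))
      (Set.Icc A B))
    (c : Fin m → ℝ) (hc0 : c ⟨0, by omega⟩ = A) (hc : StrictMono c)
    (hcB : ∀ j, c j ≤ B) :
    (Matrix.of fun i j : Fin (2 * m - 1) =>
      if hi : (i : ℕ) = 0 then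
        (if (j : ℕ) < m then (1 : ℝ) else 0)
      else
        (if hj : (j : ℕ) < m then
          Ψ ⟨(i : ℕ) - 1, by have := i.isLt; omega⟩ (c ⟨j, hj⟩)
        else
          derivWithin (Ψ ⟨(i : ℕ) - 1, by have := i.isLt; omega⟩) (Set.Icc A B)
            (c ⟨(j : ℕ) - m + 1, by have := j.isLt; omega⟩))).det ≠ 0 := by
  intro hdet
  have hcmem : ∀ j : Fin m, c j ∈ Set.Icc A B := by
    intro j
    refine ⟨?_, hcB j⟩
    rw [← hc0]
    exact hc.monotone (by simp [Fin.le_def])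
  -- row dependence
  obtain ⟨v, hv0, hv⟩ := Matrix.exists_vecMul_eq_zero_iff.mpr hdet
  set w : Fin (2 * m - 2) → ℝ := fun k => v ⟨k.val + 1, by have := k.isLt; omega⟩ with hw
  set G : ℝ → ℝ := fun x => ∑ k, w k * derivWithin (Ψ k) (Set.Icc A B) x with hG
  set F : ℝ → ℝ := fun x => v ⟨0, by omega⟩ + ∑ k, w k * Ψ k x with hF
  have hsplit : 2 * m - 1 = (2 * m - 2) + 1 := by omega
  -- values of F at the c j vanish
  have hFc : ∀ j : Fin m, F (c j) = 0 := by
    intro j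
    have hj1 : (j : ℕ) < 2 * m - 1 := by have := j.isLt; omega
    have h := congrFun hv ⟨j, hj1⟩
    simp only [Matrix.vecMul, dotProduct, Matrix.of_apply, Pi.zero_apply] at h
    rw [sum_fin_split hsplit] at h
    simp only [dif_pos rfl, dif_neg (Nat.succ_ne_zero _), if_pos j.isLt, dif_pos j.isLt, dite_true] at h
    rw [mul_one] at h
    exact h
  -- derivative-combination vanishes at c j for j ≥ 1
  have hGc : ∀ j : Fin m, 0 < (j : ℕ) → G (c j) = 0 := by
    intro j hj
    have hj1 : m + (j : ℕ) - 1 < 2 * m - 1 := by have := j.isLt; omega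
    have h := congrFun hv ⟨m + (j : ℕ) - 1, hj1⟩
    simp only [Matrix.vecMul, dotProduct, Matrix.of_apply, Pi.zero_apply] at h
    rw [sum_fin_split hsplit] at h
    have hnotlt : ¬ ((⟨m + (j : ℕ) - 1, hj1⟩ : Fin (2 * m - 1)) : ℕ) < m := by
      simp only [Fin.val_mk]; omega
    simp only [dif_pos rfl, dif_neg (Nat.succ_ne_zero _), if_neg hnotlt, dif_neg hnotlt,
      dite_true, mul_zero, zero_add] at h
    have harg : (⟨m + (j : ℕ) - 1, hj1⟩ : Fin (2 * m - 1)).val - m + 1 = (j : ℕ) := by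
      simp only [Fin.val_mk]; omega
    rw [hG]
    rw [show c j = c ⟨(⟨m + (j : ℕ) - 1, hj1⟩ : Fin (2 * m - 1)).val - m + 1, by omega⟩ by
      congr 1; exact (Fin.ext harg.symm)]
    exact h
  -- differentiability facts
  have hdiff : ∀ k, DifferentiableOn ℝ (Ψ k) (Set.Icc A B) :=
    fun k => (hΨsmooth k).differentiableOn one_ne_zero
  have hFderiv : ∀ x ∈ Set.Ioo A B, HasDerivAt F (G x) x := by
    intro x hx
    have hmem : Set.Icc A B ∈ nhds x := Icc_mem_nhds hx.1 hx.2
    have hsum : HasDerivAt (fun y => ∑ k, w k * Ψ k y)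
        (∑ k, w k * derivWithin (Ψ k) (Set.Icc A B) x) x := by
      apply HasDerivAt.fun_sum
      intro k _
      have h1 : HasDerivWithinAt (Ψ k) (derivWithin (Ψ k) (Set.Icc A B) x)
          (Set.Icc A B) x :=
        ((hdiff k) x ⟨le_of_lt hx.1, le_of_lt hx.2⟩).hasDerivWithinAt
      exact (h1.hasDerivAt hmem).const_mul (w k)
    simpa [hF, hG] using hsum.const_add (v ⟨0, by omega⟩)
  have hFcont : ContinuousOn F (Set.Icc A B) := by
    apply ContinuousOn.add continuousOn_const
    exact continuousOn_finset_sum _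
      (fun k _ => continuousOn_const.mul (hΨsmooth k).continuousOn)
  -- Rolle: zeros of G between consecutive c's
  have rolle : ∀ j : ℕ, ∀ hj : j + 1 < m,
      ∃ x, x ∈ Set.Ioo (c ⟨j, by omega⟩) (c ⟨j+1, hj⟩) ∧ G x = 0 := by
    intro j hj
    have hlt : c ⟨j, by omega⟩ < c ⟨j+1, hj⟩ := hc (by simp [Fin.lt_def])
    have hsub : Set.Icc (c ⟨j, by omega⟩) (c ⟨j+1, hj⟩) ⊆ Set.Icc A B :=
      Set.Icc_subset_Icc (hcmem _).1 (hcmem _).2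
    obtain ⟨x, hx, hGx⟩ := exists_hasDerivAt_eq_zero hlt (hFcont.mono hsub)
      (by rw [hFc, hFc])
      (fun x hx => hFderiv x ⟨lt_of_le_of_lt (hcmem ⟨j, by omega⟩).1 hx.1,
        lt_of_lt_of_le hx.2 (hcmem ⟨j+1, hj⟩).2⟩)
    exact ⟨x, hx, hGx⟩
  choose ξ hξ using rolle
  -- the interleaved points
  have hdiv : ∀ i : Fin (2 * m - 2), i.val / 2 + 1 < m := by
    intro i; have := i.isLt; omega
  set t : Fin (2 * m - 2) → ℝ := fun i =>
    if i.val % 2 = 0 then ξ (i.val / 2) (hdiv i) else c ⟨i.val / 2 + 1, hdiv i⟩ with ht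
  have htmem : ∀ i, t i ∈ Set.Icc A B := by
    intro i
    simp only [ht]
    by_cases hpar : i.val % 2 = 0
    · rw [if_pos hpar]
      have h1 := hξ (i.val / 2) (hdiv i)
      exact ⟨le_trans (hcmem ⟨i.val / 2, by omega⟩).1 h1.1.1.le,
        le_trans h1.1.2.le (hcmem ⟨i.val / 2 + 1, hdiv i⟩).2⟩
    · rw [if_neg hpar]
      exact hcmem _
  have htmono : StrictMono t := by
    apply strictMono_of_lt_succ'
    intro i hi
    rw [ht]
    simp only
    by_cases hpar : i % 2 = 0
    · rw [if_pos hpar, if_neg (by omega)]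
      have he : (i + 1) / 2 = i / 2 := by omega
      have h1 := (hξ (i / 2) (hdiv ⟨i, by omega⟩)).1.2
      rw [show (⟨(i+1)/2 + 1, hdiv ⟨i+1, hi⟩⟩ : Fin m) = ⟨i/2 + 1, hdiv ⟨i, by omega⟩⟩ from
        Fin.ext (by simp [he])]
      exact h1
    · rw [if_neg hpar, if_pos (by omega)]
      have he : (i + 1) / 2 = i / 2 + 1 := by omega
      have h1 := (hξ ((i+1) / 2) (hdiv ⟨i+1, hi⟩)).1.1
      refine lt_of_le_of_lt ?_ h1
      have : c ⟨i/2 + 1, hdiv ⟨i, by omega⟩⟩ = c ⟨(i+1)/2, by omega⟩ := by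
        congr 1; exact Fin.ext (by simp [he])
      rw [this]
  have htG : ∀ i, G (t i) = 0 := by
    intro i
    simp only [ht]
    by_cases hpar : i.val % 2 = 0
    · rw [if_pos hpar]
      exact (hξ (i.val / 2) (hdiv i)).2
    · rw [if_neg hpar]
      exact hGc _ (by simp)
  -- the Chebyshev property forces w = 0
  have hwzero : w = 0 := by
    by_contra hwne
    apply hCheb' t htmono htmem
    rw [← Matrix.exists_mulVec_eq_zero_iff]
    refine ⟨w, hwne, ?_⟩
    funext i
    have : (Matrix.of fun i j => derivWithin (Ψ j) (Set.Icc A B) (t i)).mulVec w i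
        = G (t i) := by
      simp only [Matrix.mulVec, dotProduct, Matrix.of_apply, hG]
      exact Finset.sum_congr rfl (fun k _ => mul_comm _ _)
    rw [Pi.zero_apply, this, htG]
  -- hence v vanishes
  have hv00 : v ⟨0, by omega⟩ = 0 := by
    have h := hFc ⟨0, by omega⟩
    rw [hF] at h
    simp only [hwzero, Pi.zero_apply, zero_mul, Finset.sum_const_zero, add_zero] at h
    exact h
  apply hv0
  funext i
  by_cases h0 : (i : ℕ) = 0
  · rw [show i = ⟨0, by omega⟩ from Fin.ext h0]
    exact hv00
  · have hi1 : (i : ℕ) - 1 < 2 * m - 2 := by have := i.isLt; omega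
    have h := congrFun hwzero ⟨(i : ℕ) - 1, hi1⟩
    rw [hw] at h
    simp only [Pi.zero_apply] at h
    rw [show (⟨((⟨(i:ℕ) - 1, hi1⟩ : Fin (2*m-2)) : ℕ) + 1, by omega⟩ : Fin (2*m-1)) = i from
      Fin.ext (by simp; omega)] at h
    exact h
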